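/- For every natural number N > 1 and every natural number k ≥ 1, let n = 2k+1 and let X = ℝⁿ equipped with the norm ‖x‖ = (∑_{i=1}^n |x_i|^{2N})^{1/(2N)}. There exist a set K ⊆ X (namely the closed unit ball of X), a point z ∈ X \ K, and a continuous polynomial Q : ℝⁿ → ℝ such that: (i) Q separates z from K, i.e. sup_{w∈K}|Q(w)| < |Q(z)|; (ii) for every l with 1 ≤ l ≤ N−1, the l-th symmetrization P_l does not separate z from K, i.e. sup_{w∈K}|P_l(w)| ≥ |P_l(z)|; and (iii) P_N separates z from K. Here P_l(x) = (1/n!) ∑_{σ ∈ Sym(n)} Q(x_{σ(1)}, …, x_{σ(n)})^l denotes the l-th symmetrization of Q with respect to the permutation group Sym(n). -/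

import Mathlib

/-- The closed unit ball of `ℝⁿ` for the `ℓ^{2N}` norm, described by
`∑ i |x i|^(2N) ≤ 1`. -/
def unitBall2N (n N : ℕ) : Set (Fin n → ℝ) :=
  {x | ∑ i, |x i| ^ (2 * N) ≤ 1}

/-- The `l`-th symmetrization of a polynomial `Q` on `ℝⁿ` with respect to the permutation
group `Sym(n)`: `P_l(x) = (1/n!) ∑_{σ ∈ Sym(n)} Q(x_{σ(1)}, …, x_{σ(n)})^l`. -/
noncomputable def symmetrization (n : ℕ) (Q : MvPolynomial (Fin n) ℝ) (l : ℕ)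
    (x : Fin n → ℝ) : ℝ :=
  (1 / (n.factorial : ℝ)) * ∑ σ : Equiv.Perm (Fin n),
    (MvPolynomial.eval (fun i => x (σ i)) Q) ^ l

lemma symm_X (m l : ℕ) (x : Fin (m+1) → ℝ) :
    symmetrization (m+1) (MvPolynomial.X 0) l x
      = (1 / ((m:ℝ)+1)) * ∑ j, x j ^ l := by
  unfold symmetrization
  simp only [MvPolynomial.eval_X]
  rw [← Equiv.sum_comp (Equiv.Perm.decomposeFin.symm)
      (fun σ => x (σ 0) ^ l)]
  simp only [Fintype.sum_prod_type, Equiv.Perm.decomposeFin_symm_apply_zero,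
    Finset.sum_const, Finset.card_univ, Fintype.card_perm, nsmul_eq_mul]
  rw [Finset.mul_sum, Finset.mul_sum]
  refine Finset.sum_congr rfl fun i _ => ?_
  have h1 : ((m+1).factorial : ℝ) = ((m:ℝ)+1) * (m.factorial : ℝ) := by
    rw [Nat.factorial_succ]; push_cast; ring
  have h2 : (m.factorial : ℝ) ≠ 0 := Nat.cast_ne_zero.2 m.factorial_ne_zero
  have h3 : ((m:ℝ)+1) ≠ 0 := by positivity
  simp only [Fintype.card_fin]
  rw [h1]
  field_simp

/-- For every `N > 1` and `k ≥ 1`, with `n = 2k+1` and the `ℓ^{2N}` norm on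
`ℝⁿ`, there exist `K` (the closed unit ball), a point `z ∉ K` and a polynomial `Q` such that
`Q` separates `z` from `K`, the `l`-th symmetrizations `P_l` (`1 ≤ l ≤ N-1`) do not separate
`z` from `K`, and `P_N` separates `z` from `K`. -/
theorem statement2 (N k : ℕ) (hN : 1 < N) (hk : 1 ≤ k) :
    ∃ (Q : MvPolynomial (Fin (2 * k + 1)) ℝ) (z : Fin (2 * k + 1) → ℝ),
      z ∉ unitBall2N (2 * k + 1) N ∧
      (∃ c, c < |MvPolynomial.eval z Q| ∧
        ∀ w ∈ unitBall2N (2 * k + 1) N, |MvPolynomial.eval w Q| ≤ c) ∧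
      (∀ l, 1 ≤ l → l ≤ N - 1 →
        ¬ ∃ c, c < |symmetrization (2 * k + 1) Q l z| ∧
          ∀ w ∈ unitBall2N (2 * k + 1) N, |symmetrization (2 * k + 1) Q l w| ≤ c) ∧
      (∃ c, c < |symmetrization (2 * k + 1) Q N z| ∧
        ∀ w ∈ unitBall2N (2 * k + 1) N, |symmetrization (2 * k + 1) Q N w| ≤ c) := by
  -- basic real constants
  set b : ℝ := ((2 * k + 1 : ℕ) : ℝ) with hbdef
  have hb3 : (3 : ℝ) ≤ b := by
    have h3 : (3 : ℕ) ≤ 2 * k + 1 := by omega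
    rw [hbdef]; exact_mod_cast h3
  have hb1 : (1 : ℝ) < b := by linarith
  have hb0 : (0 : ℝ) < b := by linarith
  set Nr : ℝ := (N : ℝ) with hNrdef
  have hNr2 : (2 : ℝ) ≤ Nr := by
    have h2 : (2:ℕ) ≤ N := hN
    rw [hNrdef]; exact_mod_cast h2
  have hNr1 : (1 : ℝ) ≤ Nr - 1 := by linarith
  have hNrpos : (0 : ℝ) < Nr := by linarith
  have hNm1pos : (0 : ℝ) < Nr - 1 := by linarith
  set α : ℝ := 1 / (2 * Nr) + 1 / (Nr * (Nr - 1)) with hαdef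
  have hα : 0 < α := by positivity
  set t : ℝ := b ^ α with htdef
  have ht0 : 0 < t := Real.rpow_pos_of_pos hb0 _
  -- the point and polynomial
  set z : Fin (2 * k + 1) → ℝ := fun i => if i = 0 then t else 0 with hzdef
  refine ⟨MvPolynomial.X 0, z, ?_, ?_, ?_, ?_⟩
  · -- z not in the ball
    intro hz
    have hsum : ∑ i, |z i| ^ (2 * N) = t ^ (2 * N) := by
      rw [hzdef]
      rw [Finset.sum_eq_single (0 : Fin (2 * k + 1))]
      · simp [abs_of_pos ht0]
      · intro i _ hi
        simp [hi, zero_pow (by omega : 2 * N ≠ 0)]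
      · simp
    have : (1 : ℝ) < t ^ (2 * N) := by
      rw [htdef, ← Real.rpow_natCast (b ^ α) (2 * N), ← Real.rpow_mul hb0.le]
      apply Real.one_lt_rpow_iff_of_pos hb0 |>.2
      left
      constructor
      · exact hb1
      · have : (0:ℝ) < (2 * N : ℕ) := by positivity
        positivity
    have hle := hz
    simp only [unitBall2N, Set.mem_setOf_eq] at hle
    rw [hsum] at hle
    linarith
  · -- Q separates
    refine ⟨1, ?_, ?_⟩
    · rw [MvPolynomial.eval_X]
      have hz0 : z 0 = t := by simp [hzdef]
      rw [hz0, abs_of_pos ht0, htdef]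
      exact (Real.one_lt_rpow_iff_of_pos hb0).2 (Or.inl ⟨hb1, hα⟩)
    · intro w hw
      simp only [MvPolynomial.eval_X]
      simp only [unitBall2N, Set.mem_setOf_eq] at hw
      have h1 : |w 0| ^ (2 * N) ≤ 1 := by
        calc |w 0| ^ (2 * N) ≤ ∑ i, |w i| ^ (2 * N) :=
              Finset.single_le_sum (f := fun i : Fin (2 * k + 1) => |w i| ^ (2 * N))
                (fun i _ => by positivity) (Finset.mem_univ 0)
        _ ≤ 1 := hw
      exact (pow_le_one_iff_of_nonneg (abs_nonneg _) (by omega)).1 h1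
  · -- low symmetrizations do not separate
    intro l hl1 hlN ⟨c, hc, hbound⟩
    have hlNr : (l : ℝ) ≤ Nr - 1 := by
      have : l ≤ N - 1 := hlN
      have : (l : ℕ) + 1 ≤ N := by omega
      have := (Nat.cast_le (α := ℝ)).2 this
      push_cast at this
      linarith
    set s : ℝ := b ^ (-(1 / (2 * Nr))) with hsdef
    have hs0 : 0 < s := Real.rpow_pos_of_pos hb0 _
    set w : Fin (2 * k + 1) → ℝ := fun _ => s with hwdef
    have hbcast : ((2 * k : ℕ) : ℝ) + 1 = b := by rw [hbdef]; push_cast; ring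
    have hwK : w ∈ unitBall2N (2 * k + 1) N := by
      simp only [unitBall2N, Set.mem_setOf_eq, hwdef]
      rw [Finset.sum_const, Finset.card_univ, Fintype.card_fin, nsmul_eq_mul]
      have : |s| ^ (2 * N) = b ^ (-(1:ℝ)) := by
        rw [abs_of_pos hs0, hsdef, ← Real.rpow_natCast (b ^ _) (2 * N),
          ← Real.rpow_mul hb0.le]
        congr 1
        push_cast
        field_simp
        rw [hNrdef]
      rw [this, Real.rpow_neg_one, mul_inv_cancel₀ hb0.ne']
    -- values of the symmetrization
    have hPz : symmetrization (2 * k + 1) (MvPolynomial.X 0) l z = (1 / b) * t ^ l := by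
      rw [symm_X (2 * k) l z, hbcast]
      congr 1
      rw [hzdef, Finset.sum_eq_single (0 : Fin (2 * k + 1))]
      · simp
      · intro i _ hi; simp [hi, zero_pow (by omega : l ≠ 0)]
      · simp
    have hPw : symmetrization (2 * k + 1) (MvPolynomial.X 0) l w = s ^ l := by
      rw [symm_X (2 * k) l w, hbcast, hwdef]
      rw [Finset.sum_const, Finset.card_univ, Fintype.card_fin, nsmul_eq_mul]
      push_cast
      have hne : (2*(k:ℝ)+1) ≠ 0 := by positivity
      field_simp
      rw [hbdef]; push_cast; ring
    have hkey : (1 / b) * t ^ l ≤ s ^ l := by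
      have h1 : (1 / b) * t ^ l = b ^ (α * l - 1) := by
        rw [htdef, ← Real.rpow_natCast (b ^ α) l, ← Real.rpow_mul hb0.le,
          Real.rpow_sub hb0, Real.rpow_one]
        ring
      have h2 : s ^ l = b ^ (-(1 / (2 * Nr)) * l) := by
        rw [hsdef, ← Real.rpow_natCast (b ^ _) l, ← Real.rpow_mul hb0.le]
      rw [h1, h2, Real.rpow_le_rpow_left_iff hb1]
      have hsum : α + 1 / (2 * Nr) = 1 / (Nr - 1) := by
        rw [hαdef]; field_simp; ring
      have : (l : ℝ) * (α + 1 / (2 * Nr)) ≤ 1 := by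
        rw [hsum]
        rw [mul_one_div, div_le_one hNm1pos]
        exact hlNr
      nlinarith [Nat.cast_nonneg (α := ℝ) l]
    have habs1 : |symmetrization (2 * k + 1) (MvPolynomial.X 0) l z|
        ≤ |symmetrization (2 * k + 1) (MvPolynomial.X 0) l w| := by
      rw [hPz, hPw, abs_of_pos (by positivity), abs_of_pos (by positivity)]
      exact hkey
    have := hbound w hwK
    linarith [hc.trans_le habs1]
  · -- P_N separates
    have hbcast : ((2 * k : ℕ) : ℝ) + 1 = b := by rw [hbdef]; push_cast; ring
    refine ⟨b ^ (-(1/2) : ℝ), ?_, ?_⟩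
    · have hPz : symmetrization (2 * k + 1) (MvPolynomial.X 0) N z = (1 / b) * t ^ N := by
        rw [symm_X (2 * k) N z, hbcast]
        congr 1
        rw [hzdef, Finset.sum_eq_single (0 : Fin (2 * k + 1))]
        · simp
        · intro i _ hi; simp [hi, zero_pow (by omega : N ≠ 0)]
        · simp
      rw [hPz, abs_of_pos (by positivity)]
      have h1 : (1 / b) * t ^ N = b ^ (α * N - 1) := by
        rw [htdef, ← Real.rpow_natCast (b ^ α) N, ← Real.rpow_mul hb0.le,
          Real.rpow_sub hb0, Real.rpow_one]
        ring
      rw [h1, Real.rpow_lt_rpow_left_iff hb1]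
      have hsum : α * Nr = 1 / 2 + 1 / (Nr - 1) := by
        rw [hαdef]; field_simp
      have : (0:ℝ) < 1 / (Nr - 1) := by positivity
      rw [← hNrdef]
      linarith [hsum]
    · intro w hw
      simp only [unitBall2N, Set.mem_setOf_eq] at hw
      have hPw : symmetrization (2 * k + 1) (MvPolynomial.X 0) N w
          = (1 / b) * ∑ j, w j ^ N := by
        rw [symm_X (2 * k) N w, hbcast]
      rw [hPw, abs_mul, abs_of_pos (by positivity : (0:ℝ) < 1 / b)]
      -- Cauchy-Schwarz bound
      have hcs : (∑ j, |w j| ^ N) ^ 2 ≤ b := by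
        have := Finset.sum_mul_sq_le_sq_mul_sq Finset.univ
          (fun _ : Fin (2 * k + 1) => (1:ℝ)) (fun j => |w j| ^ N)
        simp only [one_mul, one_pow, Finset.sum_const, Finset.card_univ,
          Fintype.card_fin, nsmul_eq_mul, mul_one] at this
        calc (∑ j, |w j| ^ N) ^ 2 ≤ ((2 * k + 1 : ℕ) : ℝ) * ∑ j, (|w j| ^ N) ^ 2 := this
          _ = b * ∑ j, |w j| ^ (2 * N) := by
              rw [hbdef]
              congr 1
              exact Finset.sum_congr rfl fun j _ => by rw [← pow_mul, mul_comm N 2]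
          _ ≤ b * 1 := by
              apply mul_le_mul_of_nonneg_left hw hb0.le
          _ = b := mul_one b
      have habs : |∑ j, w j ^ N| ≤ ∑ j, |w j| ^ N := by
        calc |∑ j, w j ^ N| ≤ ∑ j, |w j ^ N| := Finset.abs_sum_le_sum_abs _ _
          _ = ∑ j, |w j| ^ N := Finset.sum_congr rfl fun j _ => abs_pow _ _
      have hsq : ∑ j, |w j| ^ N ≤ b ^ ((1:ℝ)/2) := by
        have hnn : (0:ℝ) ≤ ∑ j, |w j| ^ N :=
          Finset.sum_nonneg fun j _ => by positivity
        have hhalf : b ^ ((1:ℝ)/2) * b ^ ((1:ℝ)/2) = b := by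
          rw [← Real.rpow_add hb0]; norm_num
        nlinarith [hhalf, Real.rpow_pos_of_pos hb0 ((1:ℝ)/2), hcs, hnn]
      calc (1 / b) * |∑ j, w j ^ N| ≤ (1 / b) * (b ^ ((1:ℝ)/2)) := by
            apply mul_le_mul_of_nonneg_left (habs.trans hsq) (by positivity)
        _ = b ^ (-(1/2) : ℝ) := by
            rw [one_div, ← Real.rpow_neg_one, ← Real.rpow_add hb0]
            norm_num
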